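/- arXiv:1808.01274 — 2 statements merged into one kernel-verified Lean document; each statement's English description precedes it below -/
import Mathlib

section
/- Let Y_1, Y_2, ... be i.i.d. real random variables with common CDF F, let q ∈ (0,1), and suppose x₀ is such that F(x₀) ≥ q and F(x₀ + ε) > q for every ε > 0 (i.e., x₀ is the unique q-quantile in the sense that F exceeds q strictly to the right of x₀ and F(x) < q for x < x₀). Then the sample quantile ξ_n(q) = inf{x : F_n(x) ≥ q}, where F_n is the empirical CDF, converges almost surely to x₀ as n → ∞. -/
open MeasureTheory ProbabilityTheory Filter Set

theorem sample_quantile_strong_consistency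
    {Ω : Type*} [MeasurableSpace Ω] (μ : Measure Ω) [IsProbabilityMeasure μ]
    (Y : ℕ → Ω → ℝ) (hmeas : ∀ i, Measurable (Y i))
    (hindep : iIndepFun Y μ)
    (hident : ∀ i, Measure.map (Y i) μ = Measure.map (Y 0) μ)
    (F : ℝ → ℝ) (hF : ∀ x, F x = (μ {ω | Y 0 ω ≤ x}).toReal)
    (q : ℝ) (hq : q ∈ Ioo (0:ℝ) 1) (x₀ : ℝ)
    (hx₀ : F x₀ ≥ q)
    (h_right : ∀ ε > 0, F (x₀ + ε) > q)
    (h_left : ∀ ε > 0, F (x₀ - ε) < q)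
    (Fn : ℕ → ℝ → Ω → ℝ)
    (hFn : ∀ n x ω, Fn n x ω = (1 / (n:ℝ)) * ∑ i ∈ Finset.range n, if Y i ω ≤ x then (1:ℝ) else 0)
    (ξn : ℕ → Ω → ℝ)
    (hξn : ∀ n ω, ξn n ω = sInf {x | Fn n x ω ≥ q}) :
    ∀ᵐ ω ∂μ, Tendsto (fun n => ξn n ω) atTop (nhds x₀) := by
  -- monotonicity of Fn in x
  have hmono : ∀ n ω ⦃x y : ℝ⦄, x ≤ y → Fn n x ω ≤ Fn n y ω := by
    intro n ω x y hxy
    rw [hFn, hFn]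
    apply mul_le_mul_of_nonneg_left _ (by positivity)
    apply Finset.sum_le_sum
    intro i _
    by_cases h : Y i ω ≤ x
    · simp [h, h.trans hxy]
    · by_cases h' : Y i ω ≤ y <;> simp [h, h']
  -- pointwise SLLN for Fn at each x
  have hslln : ∀ x : ℝ, ∀ᵐ ω ∂μ, Tendsto (fun n => Fn n x ω) atTop (nhds (F x)) := by
    intro x
    set f : ℝ → ℝ := Set.indicator (Iic x) (fun _ => 1) with hf
    have hfm : Measurable f := (measurable_const.indicator measurableSet_Iic)
    set X : ℕ → Ω → ℝ := fun i ω => f (Y i ω) with hX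
    have hXi : ∀ i ω, X i ω = if Y i ω ≤ x then (1:ℝ) else 0 := by
      intro i ω
      simp [hX, hf, Set.indicator, Set.mem_Iic]
    have hint : Integrable (X 0) μ := by
      have : X 0 = Set.indicator {ω | Y 0 ω ≤ x} (fun _ => (1:ℝ)) := by
        ext ω; simp [hXi, Set.indicator, Set.mem_setOf_eq]
      rw [this]
      exact (integrable_const (1:ℝ)).indicator ((hmeas 0) measurableSet_Iic)
    have hpind : Pairwise (Function.onFun (IndepFun · · μ) X) := by
      intro i j hij
      exact (hindep.indepFun hij).comp hfm hfm
    have hid : ∀ i, IdentDistrib (X i) (X 0) μ μ := by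
      intro i
      have hYd : IdentDistrib (Y i) (Y 0) μ μ :=
        ⟨(hmeas i).aemeasurable, (hmeas 0).aemeasurable, hident i⟩
      exact hYd.comp hfm
    have hlim := strong_law_ae_real X hint hpind hid
    have hEX : μ[X 0] = F x := by
      have : X 0 = Set.indicator {ω | Y 0 ω ≤ x} (fun _ => (1:ℝ)) := by
        ext ω; simp [hXi, Set.indicator, Set.mem_setOf_eq]
      have hs : MeasurableSet {ω | Y 0 ω ≤ x} := (hmeas 0) measurableSet_Iic
      rw [this, MeasureTheory.integral_indicator_const (1:ℝ) hs, hF x]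
      simp [Measure.real]
    rw [hEX] at hlim
    filter_upwards [hlim] with ω hω
    have : (fun n : ℕ => (∑ i ∈ Finset.range n, X i ω) / n) = fun n => Fn n x ω := by
      ext n
      rw [hFn]
      simp only [hXi]
      ring
    rwa [this] at hω
  -- good event, countable intersection
  have hgood : ∀ᵐ ω ∂μ, ∀ k : ℕ,
      Tendsto (fun n => Fn n (x₀ + 1/(k+1)) ω) atTop (nhds (F (x₀ + 1/(k+1)))) ∧
      Tendsto (fun n => Fn n (x₀ - 1/(k+1)) ω) atTop (nhds (F (x₀ - 1/(k+1)))) := by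
    rw [MeasureTheory.ae_all_iff]
    intro k
    filter_upwards [hslln (x₀ + 1/(k+1)), hslln (x₀ - 1/(k+1))] with ω h1 h2
    exact ⟨h1, h2⟩
  filter_upwards [hgood] with ω hω
  rw [Metric.tendsto_atTop]
  intro ε hε
  obtain ⟨k, hk⟩ := exists_nat_one_div_lt hε
  set δ : ℝ := 1/(k+1) with hδ
  have hδpos : 0 < δ := by positivity
  obtain ⟨hP, hM⟩ := hω k
  have hevP : ∀ᶠ n in atTop, q < Fn n (x₀ + δ) ω :=
    hP.eventually (eventually_gt_nhds (h_right δ hδpos))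
  have hevM : ∀ᶠ n in atTop, Fn n (x₀ - δ) ω < q :=
    hM.eventually (eventually_lt_nhds (h_left δ hδpos))
  rw [Filter.eventually_atTop] at hevP hevM
  obtain ⟨N₁, hN₁⟩ := hevP
  obtain ⟨N₂, hN₂⟩ := hevM
  refine ⟨max N₁ N₂, fun n hn => ?_⟩
  have hn₁ := hN₁ n (le_trans (le_max_left _ _) hn)
  have hn₂ := hN₂ n (le_trans (le_max_right _ _) hn)
  set S : Set ℝ := {x | Fn n x ω ≥ q} with hS
  have hmem : x₀ + δ ∈ S := le_of_lt hn₁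
  have hsub : S ⊆ Ici (x₀ - δ) := by
    intro x hx
    by_contra hlt
    rw [Set.mem_Ici, not_le] at hlt
    exact absurd (le_trans hx (hmono n ω hlt.le)) (not_le.mpr hn₂)
  have hbdd : BddBelow S := ⟨x₀ - δ, hsub⟩
  have h1 : sInf S ≤ x₀ + δ := csInf_le hbdd hmem
  have h2 : x₀ - δ ≤ sInf S := le_csInf ⟨_, hmem⟩ (fun x hx => hsub hx)
  rw [hξn, Real.dist_eq, ← hS, abs_sub_lt_iff]
  constructor <;> linarith
end

section
/- Let Z have the Gamma(α, β) distribution with α > 1 and rate β > 0, with density f(x) = β^α/Γ(α) · x^{α-1} e^{-βx} for x > 0. Then for all x ≥ 1, the ratio (1 - F(x))/f(x) is bounded above by 2^{α-1}/β + 2^{α-1} Γ(α)/(β^α x^{α-1}), where F is the CDF and Γ the gamma function. -/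
open Real Set MeasureTheory

theorem gamma_mills_ratio_bound
    (α β : ℝ) (hα : 1 < α) (hβ : 0 < β)
    (f : ℝ → ℝ) (hf : ∀ x, f x = β ^ α / Real.Gamma α * (x ^ (α - 1) * exp (-β * x)))
    (F : ℝ → ℝ) (hF : ∀ x, F x = ∫ t in Ioc (0:ℝ) x, f t) :
    ∀ x ≥ (1:ℝ),
      (1 - F x) / f x ≤ 2 ^ (α - 1) / β + 2 ^ (α - 1) * Real.Gamma α / (β ^ α * x ^ (α - 1)) := by
  intro x hx
  have hx0 : (0:ℝ) < x := lt_of_lt_of_le one_pos hx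
  have hα0 : (0:ℝ) < α := lt_trans one_pos hα
  have hα1 : (0:ℝ) ≤ α - 1 := by linarith
  have hΓ : 0 < Real.Gamma α := Real.Gamma_pos_of_pos hα0
  have hβα : (0:ℝ) < β ^ α := rpow_pos_of_pos hβ α
  set c : ℝ := β ^ α / Real.Gamma α with hc
  have hcpos : 0 < c := div_pos hβα hΓ
  set G : ℝ → ℝ := fun t => t ^ (α - 1) * exp (-β * t) with hG
  -- integrability of G on Ioi 0
  have hGint : IntegrableOn G (Ioi 0) := by
    have h := integrableOn_rpow_mul_exp_neg_mul_rpow (s := α - 1) (p := 1) (b := β)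
      (by linarith) one_pos hβ
    rw [hG]
    simp only [neg_mul]
    simpa [rpow_one] using h
  have hGnn : ∀ t ∈ Ioi (0:ℝ), 0 ≤ G t := by
    intro t ht
    have : (0:ℝ) < t := ht
    positivity
  -- value of the full integral
  have hIoi0 : (∫ t in Ioi 0, G t) = Real.Gamma α / β ^ α := by
    have h := Real.integral_rpow_mul_exp_neg_mul_Ioi hα0 hβ
    rw [hG]
    simp only [neg_mul]
    rw [h, one_div, Real.inv_rpow hβ.le, inv_mul_eq_div]
  -- split of full integral at x
  have hGx : IntegrableOn G (Ioi x) := hGint.mono_set (Ioi_subset_Ioi hx0.le)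
  have hsplit : (∫ t in Ioc 0 x, G t) + ∫ t in Ioi x, G t = ∫ t in Ioi 0, G t := by
    rw [← setIntegral_union (Ioc_disjoint_Ioi le_rfl) measurableSet_Ioi
      (hGint.mono_set Ioc_subset_Ioi_self) hGx, Ioc_union_Ioi_eq_Ioi hx0.le]
  have hFx : F x = c * ∫ t in Ioc 0 x, G t := by
    rw [hF, ← integral_const_mul]
    exact setIntegral_congr_fun measurableSet_Ioc (fun t _ => hf t)
  have hone : c * ∫ t in Ioi 0, G t = 1 := by
    rw [hIoi0, hc, div_mul_div_comm, mul_comm, div_self (by positivity)]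
  have htail : 1 - F x = c * ∫ t in Ioi x, G t := by
    rw [hFx, ← hone, ← hsplit]; ring
  -- exponential integral
  have hexpint : IntegrableOn (fun t : ℝ => exp (-β * t)) (Ioi x) :=
    exp_neg_integrableOn_Ioi x hβ
  have hexpval : (∫ t in Ioi x, exp (-β * t)) = exp (-β * x) / β := by
    have hderiv : ∀ t ∈ Ici x, HasDerivAt (fun u : ℝ => -(exp (-β * u) / β)) (exp (-β * t)) t := by
      intro t _
      have h1 : HasDerivAt (fun u : ℝ => -β * u) (-β) t := by
        simpa using (hasDerivAt_id t).const_mul (-β)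
      have h2 := ((h1.exp).div_const β).neg
      have h3 : -(exp (-β * t) * -β / β) = exp (-β * t) := by
        rw [mul_neg, neg_div, neg_neg, mul_div_assoc, div_self hβ.ne', mul_one]
      rw [h3] at h2
      exact h2
    have htend : Filter.Tendsto (fun u : ℝ => -(exp (-β * u) / β)) Filter.atTop (nhds 0) := by
      have h1 : Filter.Tendsto (fun u : ℝ => β * u) Filter.atTop Filter.atTop :=
        Filter.Tendsto.const_mul_atTop hβ Filter.tendsto_id
      have h2 : Filter.Tendsto (fun u : ℝ => exp (-(β * u))) Filter.atTop (nhds 0) :=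
        (tendsto_exp_neg_atTop_nhds_zero).comp h1
      have h3 := (h2.div_const β).neg
      simpa [neg_mul] using h3
    have := integral_Ioi_of_hasDerivAt_of_tendsto' hderiv hexpint htend
    rw [this]; ring
  -- Part A : Ioc x (2x)
  have hA : (∫ t in Ioc x (2*x), G t) ≤ 2 ^ (α-1) * x ^ (α-1) * exp (-β * x) / β := by
    have hdom : IntegrableOn (fun t : ℝ => (2*x) ^ (α-1) * exp (-β * t)) (Ioc x (2*x)) :=
      (hexpint.mono_set Ioc_subset_Ioi_self).const_mul _
    have step1 : (∫ t in Ioc x (2*x), G t) ≤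
        ∫ t in Ioc x (2*x), (2*x) ^ (α-1) * exp (-β * t) := by
      refine setIntegral_mono_on
        (hGx.mono_set Ioc_subset_Ioi_self) hdom measurableSet_Ioc (fun t ht => ?_)
      have ht0 : 0 < t := lt_trans hx0 ht.1
      have h1 : t ^ (α-1) ≤ (2*x) ^ (α-1) := rpow_le_rpow ht0.le ht.2 hα1
      exact mul_le_mul_of_nonneg_right h1 (exp_pos _).le
    have step2 : (∫ t in Ioc x (2*x), (2*x) ^ (α-1) * exp (-β * t)) ≤
        (2*x) ^ (α-1) * (exp (-β * x) / β) := by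
      rw [integral_const_mul, ← hexpval]
      refine mul_le_mul_of_nonneg_left ?_ (rpow_nonneg (by positivity) _)
      refine setIntegral_mono_set hexpint ?_ (HasSubset.Subset.eventuallyLE Ioc_subset_Ioi_self)
      filter_upwards with t using (exp_pos _).le
    have h2x : (2*x) ^ (α-1) = 2 ^ (α-1) * x ^ (α-1) :=
      mul_rpow (by norm_num) hx0.le
    calc (∫ t in Ioc x (2*x), G t) ≤ (2*x) ^ (α-1) * (exp (-β * x) / β) := step1.trans step2
      _ = 2 ^ (α-1) * x ^ (α-1) * exp (-β * x) / β := by rw [h2x]; ring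
  -- translation machinery for Part B
  have hemb : MeasurableEmbedding (fun t : ℝ => t - x) :=
    (Homeomorph.subRight x).measurableEmbedding
  have hmp : MeasurePreserving (fun t : ℝ => t - x) volume volume :=
    measurePreserving_sub_right volume x
  have hpre : (fun t : ℝ => t - x) ⁻¹' (Ioi x) = Ioi (2*x) := by
    ext t
    simp only [mem_preimage, mem_Ioi]
    constructor <;> intro <;> linarith
  have htrans : (∫ t in Ioi (2*x), G (t - x)) = ∫ s in Ioi x, G s := by
    have h := hmp.setIntegral_preimage_emb hemb G (Ioi x)
    rwa [hpre] at h
  have hintB : IntegrableOn (fun t : ℝ => G (t - x)) (Ioi (2*x)) := by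
    have h : IntegrableOn (G ∘ fun t : ℝ => t - x) ((fun t : ℝ => t - x) ⁻¹' (Ioi x)) := by
      rw [hmp.integrableOn_comp_preimage hemb]
      exact hGx
    rw [hpre] at h
    exact h
  -- Part B : Ioi (2x)
  have hB : (∫ t in Ioi (2*x), G t) ≤ 2 ^ (α-1) * exp (-β * x) * (Real.Gamma α / β ^ α) := by
    have step1 : (∫ t in Ioi (2*x), G t) ≤
        ∫ t in Ioi (2*x), 2 ^ (α-1) * exp (-β * x) * G (t - x) := by
      refine setIntegral_mono_on (hGx.mono_set (Ioi_subset_Ioi (by linarith)))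
        (hintB.const_mul _) measurableSet_Ioi (fun t ht => ?_)
      have ht2x : 2*x < t := ht
      have ht0 : 0 < t := by linarith
      have htx : 0 < t - x := by linarith
      have h1 : t ^ (α-1) ≤ 2 ^ (α-1) * (t - x) ^ (α-1) := by
        rw [← mul_rpow (by norm_num) htx.le]
        exact rpow_le_rpow ht0.le (by linarith) hα1
      have h2 : exp (-β * t) = exp (-β * x) * exp (-β * (t - x)) := by
        rw [← exp_add]; ring_nf
      calc G t = t ^ (α-1) * exp (-β * t) := rfl
        _ ≤ (2 ^ (α-1) * (t - x) ^ (α-1)) * exp (-β * t) :=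
            mul_le_mul_of_nonneg_right h1 (exp_pos _).le
        _ = 2 ^ (α-1) * exp (-β * x) * ((t - x) ^ (α-1) * exp (-β * (t - x))) := by
            rw [h2]; ring
    have step2 : (∫ t in Ioi (2*x), 2 ^ (α-1) * exp (-β * x) * G (t - x)) =
        2 ^ (α-1) * exp (-β * x) * ∫ s in Ioi x, G s := by
      rw [integral_const_mul, htrans]
    have step3 : (∫ s in Ioi x, G s) ≤ Real.Gamma α / β ^ α := by
      rw [← hIoi0]
      refine setIntegral_mono_set hGint ?_
        (HasSubset.Subset.eventuallyLE (Ioi_subset_Ioi hx0.le))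
      exact (ae_restrict_iff' measurableSet_Ioi).mpr (Filter.Eventually.of_forall hGnn)
    calc (∫ t in Ioi (2*x), G t) ≤ 2 ^ (α-1) * exp (-β * x) * ∫ s in Ioi x, G s :=
          step1.trans (le_of_eq step2)
      _ ≤ 2 ^ (α-1) * exp (-β * x) * (Real.Gamma α / β ^ α) := by
          refine mul_le_mul_of_nonneg_left step3 (by positivity)
  -- combine
  have hT : (∫ t in Ioi x, G t) ≤
      2 ^ (α-1) * x ^ (α-1) * exp (-β * x) / β
      + 2 ^ (α-1) * exp (-β * x) * (Real.Gamma α / β ^ α) := by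
    have hsplit2 : (∫ t in Ioi x, G t) =
        (∫ t in Ioc x (2*x), G t) + ∫ t in Ioi (2*x), G t := by
      rw [← setIntegral_union (Ioc_disjoint_Ioi le_rfl) measurableSet_Ioi
        (hGx.mono_set Ioc_subset_Ioi_self) (hGx.mono_set (Ioi_subset_Ioi (by linarith))),
        Ioc_union_Ioi_eq_Ioi (by linarith)]
    rw [hsplit2]
    exact add_le_add hA hB
  have hfx : 0 < f x := by
    rw [hf]
    have : (0:ℝ) < x ^ (α-1) := rpow_pos_of_pos hx0 _
    positivity
  rw [div_le_iff₀ hfx]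
  rw [htail, hf x]
  have hxα : (0:ℝ) < x ^ (α-1) := rpow_pos_of_pos hx0 _
  have hRHS : (2 ^ (α - 1) / β + 2 ^ (α - 1) * Real.Gamma α / (β ^ α * x ^ (α - 1))) *
      (β ^ α / Real.Gamma α * (x ^ (α - 1) * exp (-β * x)))
      = c * (2 ^ (α-1) * x ^ (α-1) * exp (-β * x) / β
        + 2 ^ (α-1) * exp (-β * x) * (Real.Gamma α / β ^ α)) := by
    rw [hc]
    field_simp
  rw [hRHS]
  exact mul_le_mul_of_nonneg_left hT hcpos.le
end
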